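/- For every permutation w ∈ S_n, the vector V_0(w) defined by v_{ij} = −γ_{ij}(w) + Σ_{i≤k<j} γ_{k,k+1}(w) for 1 ≤ i < j ≤ n is an admitted vector: v_{i,i+1} = 0 for all i, and v_{ij} + v_{jk} ≤ v_{ik} ≤ v_{ij} + v_{jk} + 1 for all i < j < k; in particular all components are nonnegative. -/

import Mathlib

/-- `gamma w i j = 1` if `j` appears before `i` in the word `w`, else `0`. -/
def gamma (w : List ℕ) (i j : ℕ) : ℤ := if w.idxOf j < w.idxOf i then 1 else 0

/-- The vector `V₀(w)`, with `v_{ij} = −γ_{ij}(w) + Σ_{i≤k<j} γ_{k,k+1}(w)`. -/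
def V0 (w : List ℕ) (i j : ℕ) : ℤ :=
  - gamma w i j + ∑ k ∈ Finset.Ico i j, gamma w k (k + 1)

lemma gamma_nonneg (w : List ℕ) (i j : ℕ) : 0 ≤ gamma w i j := by
  unfold gamma; split <;> norm_num

lemma exists_descent (f : ℕ → ℕ) (i j : ℕ) (hij : i < j) (h : f j < f i) :
    ∃ k, i ≤ k ∧ k < j ∧ f (k + 1) < f k := by
  by_contra hc
  push_neg at hc
  have mono : ∀ m, i ≤ m → m ≤ j → f i ≤ f m := by
    intro m
    induction m with
    | zero =>
      intro h1 _
      have : i = 0 := by omega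
      simp [this]
    | succ m ih =>
      intro h1 h2
      rcases Nat.lt_or_ge i (m + 1) with hlt | hge
      · have hi : i ≤ m := by omega
        have := ih hi (by omega)
        have := hc m hi (by omega)
        omega
      · have : i = m + 1 := by omega
        simp [this]
  have := mono j (le_of_lt hij) le_rfl
  omega

lemma gamma_le_sum (w : List ℕ) (i j : ℕ) (hij : i < j) :
    gamma w i j ≤ ∑ k ∈ Finset.Ico i j, gamma w k (k + 1) := by
  by_cases h : w.idxOf j < w.idxOf i
  · obtain ⟨k, hk1, hk2, hk3⟩ := exists_descent (fun m => w.idxOf m) i j hij h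
    have hmem : k ∈ Finset.Ico i j := Finset.mem_Ico.mpr ⟨hk1, hk2⟩
    have hterm : gamma w k (k + 1) = 1 := by simp [gamma, hk3]
    calc gamma w i j = 1 := by simp [gamma, h]
      _ = gamma w k (k + 1) := hterm.symm
      _ ≤ ∑ m ∈ Finset.Ico i j, gamma w m (m + 1) :=
          Finset.single_le_sum (fun m _ => gamma_nonneg w m (m + 1)) hmem
  · have : gamma w i j = 0 := by simp [gamma, h]
    rw [this]
    exact Finset.sum_nonneg fun m _ => gamma_nonneg w m (m + 1)

theorem V0_is_admitted (n : ℕ) (w : List ℕ) (hperm : w.Perm (List.range' 1 n)) :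
    (∀ i, 1 ≤ i → i + 1 ≤ n → V0 w i (i + 1) = 0) ∧
    (∀ i j k, 1 ≤ i → i < j → j < k → k ≤ n →
      V0 w i j + V0 w j k ≤ V0 w i k ∧ V0 w i k ≤ V0 w i j + V0 w j k + 1) ∧
    (∀ i j, 1 ≤ i → i < j → j ≤ n → 0 ≤ V0 w i j) := by
  refine ⟨?_, ?_, ?_⟩
  · intro i _ _
    simp [V0, Finset.sum_Ico_eq_sum_range]
  · intro i j k _ hij hjk _
    have hsum : ∑ m ∈ Finset.Ico i j, gamma w m (m + 1)
        + ∑ m ∈ Finset.Ico j k, gamma w m (m + 1)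
        = ∑ m ∈ Finset.Ico i k, gamma w m (m + 1) :=
      Finset.sum_Ico_consecutive _ (le_of_lt hij) (le_of_lt hjk)
    have htri : gamma w i k ≤ gamma w i j + gamma w j k ∧
        gamma w i j + gamma w j k ≤ gamma w i k + 1 := by
      unfold gamma; split_ifs <;> omega
    unfold V0
    omega
  · intro i j _ hij _
    have := gamma_le_sum w i j hij
    unfold V0
    omega
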